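/- Let p be a prime and P, Q ∈ M_n(ℤ_p) commuting matrices (PQ = QP) with P² ≡ P (mod p), Q² ≡ Q (mod p), and PQ ≡ 0 (mod p). Then the limits P̃ = lim_j P^{p^j} and Q̃ = lim_j Q^{p^j} exist in M_n(ℤ_p) and satisfy P̃ · Q̃ = 0. -/

import Mathlib

open Finset Filter

section aux
variable {p : ℕ} [Fact p.Prime] {n : ℕ}

private lemma dvdR' {c : ℤ_[p]} {X Y : Matrix (Fin n) (Fin n) ℤ_[p]}
    (hY : ∀ r s, c ∣ Y r s) (r s : Fin n) : c ∣ (X * Y) r s := by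
  rw [Matrix.mul_apply]
  exact Finset.dvd_sum fun t _ => (hY t s).mul_left _

private lemma dvdMul' {c d : ℤ_[p]} {X Y : Matrix (Fin n) (Fin n) ℤ_[p]}
    (hX : ∀ r s, c ∣ X r s) (hY : ∀ r s, d ∣ Y r s)
    (r s : Fin n) : c * d ∣ (X * Y) r s := by
  rw [Matrix.mul_apply]
  exact Finset.dvd_sum fun t _ => mul_dvd_mul (hX r t) (hY t s)

private lemma dvdPowSub' {c : ℤ_[p]} {A B : Matrix (Fin n) (Fin n) ℤ_[p]} (hAB : Commute A B)
    (h : ∀ r s, c ∣ (A - B) r s) (m : ℕ) (r s : Fin n) : c ∣ (A ^ m - B ^ m) r s := by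
  rw [← Commute.geom_sum₂_mul hAB m]
  exact dvdR' h r s

private lemma dvdGeomSum' {A B : Matrix (Fin n) (Fin n) ℤ_[p]} (hAB : Commute A B)
    (h : ∀ r s, (p : ℤ_[p]) ∣ (A - B) r s) (r s : Fin n) :
    (p : ℤ_[p]) ∣ (∑ i ∈ Finset.range p, A ^ i * B ^ (p - 1 - i)) r s := by
  have key : ∀ i ∈ Finset.range p,
      A ^ i * B ^ (p - 1 - i) = A ^ (p - 1) + A ^ i * (B ^ (p - 1 - i) - A ^ (p - 1 - i)) := by
    intro i hi
    have hi' : i < p := Finset.mem_range.mp hi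
    have h2 : A ^ i * A ^ (p - 1 - i) = A ^ (p - 1) := by
      rw [← pow_add]; congr 1; omega
    rw [mul_sub, h2]; abel
  rw [Finset.sum_congr rfl key, Finset.sum_add_distrib, Finset.sum_const, Finset.card_range,
    Matrix.add_apply]
  refine dvd_add ?_ ?_
  · rw [Matrix.smul_apply, nsmul_eq_mul]
    exact Dvd.intro _ rfl
  · rw [Matrix.sum_apply]
    exact Finset.dvd_sum fun i _ => dvdR'
      (fun r s => dvdPowSub' hAB.symm (fun r s => by
        have := h r s
        rwa [← dvd_neg, ← Matrix.neg_apply, neg_sub] at this) _ r s) r s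

private lemma stepLem' {A B : Matrix (Fin n) (Fin n) ℤ_[p]} (hAB : Commute A B) {k : ℕ}
    (hk : 1 ≤ k) (h : ∀ r s, (p : ℤ_[p]) ^ k ∣ (A - B) r s) (r s : Fin n) :
    (p : ℤ_[p]) ^ (k + 1) ∣ (A ^ p - B ^ p) r s := by
  have h1 : ∀ r s, (p : ℤ_[p]) ∣ (A - B) r s := fun r s =>
    (dvd_pow_self (p : ℤ_[p]) (by omega)).trans (h r s)
  rw [← Commute.geom_sum₂_mul hAB p, pow_succ']
  exact dvdMul' (dvdGeomSum' hAB h1) h r s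

private lemma norm_le_of_dvd' {z : ℤ_[p]} {k : ℕ} (h : (p : ℤ_[p]) ^ k ∣ z) :
    ‖z‖ ≤ (p : ℝ) ^ (-(k : ℤ)) := by
  rw [PadicInt.norm_le_pow_iff_mem_span_pow, Ideal.mem_span_singleton]
  exact h

/-- convergence of `X ^ p ^ j` given successive congruences -/
private lemma conv' (X : Matrix (Fin n) (Fin n) ℤ_[p])
    (hX : ∀ j r s, (p : ℤ_[p]) ^ (j + 1) ∣ (X ^ p ^ (j + 1) - X ^ p ^ j) r s) :
    ∃ L, Tendsto (fun j : ℕ => X ^ p ^ j) atTop (nhds L) := by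
  have hp1 : 1 < p := (Fact.out : p.Prime).one_lt
  have hcau : ∀ r s : Fin n, CauchySeq fun j : ℕ => (X ^ p ^ j) r s := by
    intro r s
    refine cauchySeq_of_le_geometric (r := (p : ℝ)⁻¹) (C := (p : ℝ)⁻¹)
      (by rw [inv_lt_one_iff₀]; right; exact_mod_cast hp1) (fun j => ?_)
    have hb := norm_le_of_dvd' (hX j r s)
    rw [dist_eq_norm, ← norm_neg]
    have : -((X ^ p ^ j) r s - (X ^ p ^ (j + 1)) r s)
        = (X ^ p ^ (j + 1) - X ^ p ^ j) r s := by
      rw [Matrix.sub_apply]; ring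
    rw [this]
    refine hb.trans_eq ?_
    rw [← pow_succ', zpow_neg, zpow_natCast, inv_pow]
  choose L hL using fun r s => cauchySeq_tendsto_of_complete (hcau r s)
  refine ⟨Matrix.of L, ?_⟩
  refine tendsto_pi_nhds.mpr ?_
  intro r
  rw [tendsto_pi_nhds]
  intro s
  exact hL r s

end aux

/-- for commuting `P, Q ∈ M_n(ℤ_p)` idempotent mod `p` with `PQ ≡ 0 (mod p)`,
the limits `P̃ = lim P^{p^j}` and `Q̃ = lim Q^{p^j}` exist and satisfy `P̃ Q̃ = 0`. -/
theorem stmt_10 (p : ℕ) [Fact p.Prime] (n : ℕ) (P Q : Matrix (Fin n) (Fin n) ℤ_[p])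
    (hcomm : P * Q = Q * P)
    (hP : ∀ r s, (p : ℤ_[p]) ∣ (P * P - P) r s)
    (hQ : ∀ r s, (p : ℤ_[p]) ∣ (Q * Q - Q) r s)
    (hPQ : ∀ r s, (p : ℤ_[p]) ∣ (P * Q) r s) :
    ∃ Pt Qt : Matrix (Fin n) (Fin n) ℤ_[p],
      Filter.Tendsto (fun j : ℕ => P ^ p ^ j) Filter.atTop (nhds Pt) ∧
      Filter.Tendsto (fun j : ℕ => Q ^ p ^ j) Filter.atTop (nhds Qt) ∧
      Pt * Qt = 0 := by
  have hp : p.Prime := Fact.out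
  have hp1 : 1 < p := hp.one_lt
  -- successive congruences for any matrix idempotent mod p
  have main : ∀ X : Matrix (Fin n) (Fin n) ℤ_[p],
      (∀ r s, (p : ℤ_[p]) ∣ (X * X - X) r s) →
      ∀ j r s, (p : ℤ_[p]) ^ (j + 1) ∣ (X ^ p ^ (j + 1) - X ^ p ^ j) r s := by
    intro X hX j
    induction j with
    | zero =>
      -- X ^ p - X divisible by p
      have hXm : ∀ m : ℕ, ∀ r s, (p : ℤ_[p]) ∣ (X ^ (m + 1) - X) r s := by
        intro m
        induction m with
        | zero => simp
        | succ m ih =>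
          intro r s
          have heq : X ^ (m + 2) - X = X * (X ^ (m + 1) - X) + (X * X - X) := by
            rw [mul_sub, ← pow_succ']; abel
          rw [heq, Matrix.add_apply]
          exact dvd_add (dvdR' ih r s) (hX r s)
      intro r s
      have := hXm (p - 1) r s
      rw [(by omega : p - 1 + 1 = p)] at this
      simpa using this
    | succ j ih =>
      have h1 : X ^ p ^ (j + 1) = (X ^ p ^ j) ^ p := by rw [← pow_mul, pow_succ]
      have h2 : X ^ p ^ (j + 2) = (X ^ p ^ (j + 1)) ^ p := by rw [← pow_mul, pow_succ]
      intro r s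
      rw [h1, h2]
      exact stepLem' ((Commute.refl X).pow_pow _ _) (by omega) ih r s
  obtain ⟨Pt, hPt⟩ := conv' P (main P hP)
  obtain ⟨Qt, hQt⟩ := conv' Q (main Q hQ)
  refine ⟨Pt, Qt, hPt, hQt, ?_⟩
  -- product tends to Pt * Qt
  have hmul : Tendsto (fun j : ℕ => (P * Q) ^ p ^ j) atTop (nhds (Pt * Qt)) := by
    have := hPt.mul hQt
    refine this.congr fun j => ?_
    exact ((Commute.mul_pow (hcomm) (p ^ j))).symm ▸ rfl
  -- product tends to 0
  have hzero : Tendsto (fun j : ℕ => (P * Q) ^ p ^ j) atTop (nhds 0) := by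
    have hdvd : ∀ m : ℕ, ∀ r s, (p : ℤ_[p]) ^ m ∣ ((P * Q) ^ m) r s := by
      intro m
      induction m with
      | zero => intro r s; simp
      | succ m ih =>
        intro r s
        rw [pow_succ, pow_succ]
        exact dvdMul' ih hPQ r s
    refine tendsto_pi_nhds.mpr ?_
    intro r
    rw [tendsto_pi_nhds]
    intro s
    rw [show ((0 : Matrix (Fin n) (Fin n) ℤ_[p]) r s) = 0 from rfl]
    rw [tendsto_zero_iff_norm_tendsto_zero]
    refine squeeze_zero (fun j => norm_nonneg _) (fun j => ?_)
      (tendsto_pow_atTop_nhds_zero_of_lt_one (r := (p : ℝ)⁻¹)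
        (by positivity) (by rw [inv_lt_one_iff₀]; right; exact_mod_cast hp1))
    have hb := norm_le_of_dvd' (hdvd (p ^ j) r s)
    refine hb.trans ?_
    have h1 : ((p : ℝ))⁻¹ ^ j = (p : ℝ) ^ (-(j : ℤ)) := by
      rw [zpow_neg, ← inv_zpow, zpow_natCast]
    rw [h1]
    refine zpow_le_zpow_right₀ (by exact_mod_cast hp1.le) ?_
    have : j < p ^ j := Nat.lt_pow_self (n := j) hp1
    omega
  exact tendsto_nhds_unique hmul hzero
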